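/- Let y₁, y₂, y₃, w be real numbers with w² = y₃²/4 + y₁y₂, and define a₁ = y₃/2 + w, a₂ = 2 + y₂, a₃ = −y₃/2 + w. Then a₁a₂a₃ − a₁² − a₃² = y₁y₂² − y₃². In particular, (a₁, a₂, a₃) lies on Bottema's ruled surface a₁a₂a₃ = a₁² + a₃² if and only if (y₁, y₂, y₃) lies on the Whitney umbrella y₁y₂² = y₃². -/
import Mathlib

/-- The map `a₁ = y₃/2 + w`, `a₂ = 2 + y₂`, `a₃ = −y₃/2 + w` with `w² = y₃²/4 + y₁y₂`
satisfies `a₁a₂a₃ − a₁² − a₃² = y₁y₂² − y₃²`; hence `(a₁,a₂,a₃)` lies on Bottema's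
ruled surface `a₁a₂a₃ = a₁² + a₃²` iff `(y₁,y₂,y₃)` lies on the Whitney umbrella
`y₁y₂² = y₃²`. -/
theorem bottema_surface_is_whitney_umbrella (y₁ y₂ y₃ w a₁ a₂ a₃ : ℝ)
    (hw : w ^ 2 = y₃ ^ 2 / 4 + y₁ * y₂)
    (h₁ : a₁ = y₃ / 2 + w) (h₂ : a₂ = 2 + y₂) (h₃ : a₃ = -y₃ / 2 + w) :
    a₁ * a₂ * a₃ - a₁ ^ 2 - a₃ ^ 2 = y₁ * y₂ ^ 2 - y₃ ^ 2 ∧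
    (a₁ * a₂ * a₃ = a₁ ^ 2 + a₃ ^ 2 ↔ y₁ * y₂ ^ 2 = y₃ ^ 2) := by
  subst h₁ h₂ h₃
  have key : (y₃ / 2 + w) * (2 + y₂) * (-y₃ / 2 + w) - (y₃ / 2 + w) ^ 2
      - (-y₃ / 2 + w) ^ 2 = y₁ * y₂ ^ 2 - y₃ ^ 2 := by
    have : (y₃ / 2 + w) * (2 + y₂) * (-y₃ / 2 + w) - (y₃ / 2 + w) ^ 2
        - (-y₃ / 2 + w) ^ 2 = (2 + y₂) * (w ^ 2 - y₃ ^ 2 / 4) - 2 * w ^ 2 - y₃ ^ 2 / 2 := by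
      ring
    rw [this, hw]; ring
  exact ⟨key, by constructor <;> intro h <;> nlinarith [key]⟩
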